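/- For integers d ≥ 2 and n ≥ 1, let ρ = ρ(d,n) be the unique positive root of (d-1)ρ^{d+1} + d·n·ρ^{d-1} - n = 0 and define η(d,n) := (ρ - ρ^d)/(ρ^{d+1} + n)^{d/(d+1)}. Then d^{-1/(d-1)}·(1 - 1/d)·(n+1)^{-d/(d+1)} ≤ η(d,n) ≤ d^{-1/(d-1)}·(1 - 1/d)·n^{-d/(d+1)} < 1. -/

import Mathlib

private noncomputable def etaF (k : ℕ) (n c : ℝ) : ℝ → ℝ :=
  fun r => (r - r ^ (k+1)) / (r ^ (k+2) + n) ^ c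

private lemma etaF_hasDerivAt (k : ℕ) (n c x : ℝ) (hn : 0 < n) (hx : 0 < x) :
    HasDerivAt (etaF k n c)
      (((1 - ((k:ℝ)+1) * x ^ k) * (x ^ (k+2) + n) ^ c -
        (x - x ^ (k+1)) * (c * (x ^ (k+2) + n) ^ (c-1) * (((k:ℝ)+2) * x ^ (k+1)))) /
        ((x ^ (k+2) + n) ^ c) ^ 2) x := by
  have hBx : (0:ℝ) < x ^ (k+2) + n := by positivity
  have hN : HasDerivAt (fun r : ℝ => r - r ^ (k+1)) (1 - ((k:ℝ)+1) * x ^ k) x := by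
    have h1 := (hasDerivAt_id' (x := x)).sub (hasDerivAt_pow (k+1) x)
    rw [show k+1-1 = k from by omega] at h1
    push_cast at h1
    exact h1
  have hB : HasDerivAt (fun r : ℝ => r ^ (k+2) + n) (((k:ℝ)+2) * x ^ (k+1)) x := by
    have h1 := (hasDerivAt_pow (k+2) x).add_const n
    rw [show k+2-1 = k+1 from by omega] at h1
    push_cast at h1
    exact h1
  have hBc : HasDerivAt (fun r : ℝ => (r ^ (k+2) + n) ^ c)
      (c * (x ^ (k+2) + n) ^ (c-1) * (((k:ℝ)+2) * x ^ (k+1))) x := by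
    have h1 := (Real.hasDerivAt_rpow_const (x := x ^ (k+2) + n) (p := c)
      (Or.inl hBx.ne')).comp x hB
    exact h1
  exact hN.div hBc (Real.rpow_pos_of_pos hBx c).ne'

set_option maxHeartbeats 1000000 in
/-- Bounds on `η(d,n) = (ρ - ρ^d)/(ρ^(d+1)+n)^(d/(d+1))`, where `ρ` is the unique
positive root of `(d-1)ρ^(d+1) + d n ρ^(d-1) - n = 0`. -/
theorem eta_bounds (d n : ℕ) (hd : 2 ≤ d) (hn : 1 ≤ n) (ρ : ℝ) (hρ : 0 < ρ)
    (heq : ((d : ℝ) - 1) * ρ ^ (d + 1) + (d : ℝ) * (n : ℝ) * ρ ^ (d - 1) - (n : ℝ) = 0) :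
    (d : ℝ) ^ (-(1 : ℝ) / ((d : ℝ) - 1)) * (1 - 1 / (d : ℝ)) *
        ((n : ℝ) + 1) ^ (-(d : ℝ) / ((d : ℝ) + 1)) ≤
      (ρ - ρ ^ d) / (ρ ^ (d + 1) + (n : ℝ)) ^ ((d : ℝ) / ((d : ℝ) + 1)) ∧
    (ρ - ρ ^ d) / (ρ ^ (d + 1) + (n : ℝ)) ^ ((d : ℝ) / ((d : ℝ) + 1)) ≤
      (d : ℝ) ^ (-(1 : ℝ) / ((d : ℝ) - 1)) * (1 - 1 / (d : ℝ)) *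
        (n : ℝ) ^ (-(d : ℝ) / ((d : ℝ) + 1)) ∧
    (d : ℝ) ^ (-(1 : ℝ) / ((d : ℝ) - 1)) * (1 - 1 / (d : ℝ)) *
        (n : ℝ) ^ (-(d : ℝ) / ((d : ℝ) + 1)) < 1 := by
  obtain ⟨e, rfl⟩ : ∃ e, d = e + 1 := ⟨d - 1, by omega⟩
  have he : 1 ≤ e := by omega
  have hE1 : (1:ℝ) ≤ (e:ℝ) := by exact_mod_cast he
  have hn1 : (1:ℝ) ≤ (n:ℝ) := by exact_mod_cast hn
  have hnpos : (0:ℝ) < (n:ℝ) := by linarith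
  simp only [Nat.add_sub_cancel] at heq
  push_cast at heq ⊢
  set E := (e:ℝ) with hEdef
  have hEpos : (0:ℝ) < E := by linarith
  rw [show (e+1+1) = e+2 from rfl] at heq ⊢
  rw [show E + 1 - 1 = E by ring] at heq ⊢
  rw [show E + 1 + 1 = E + 2 by ring]
  -- heq : E * ρ ^ (e + 2) + (E + 1) * n * ρ ^ e - n = 0
  have heq' : E * ρ ^ (e+2) + (E+1) * (n:ℝ) * ρ ^ e = n := by linarith
  set c : ℝ := (E+1)/(E+2) with hcdef
  have hcpos : 0 < c := by positivity
  set r₀ : ℝ := (E+1) ^ (-(1:ℝ)/E) with hr₀def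
  have hr₀pos : 0 < r₀ := Real.rpow_pos_of_pos (by linarith) _
  have hr₀pow : r₀ ^ e = 1/(E+1) := by
    rw [hr₀def, ← Real.rpow_natCast ((E+1) ^ (-(1:ℝ)/E)) e, ← Real.rpow_mul (by linarith),
      show -(1:ℝ)/E * (e:ℝ) = -1 by rw [← hEdef]; field_simp,
      Real.rpow_neg_one]
    rw [one_div]
  have hr₀le1 : r₀ ≤ 1 :=
    Real.rpow_le_one_of_one_le_of_nonpos (by linarith)
      (div_nonpos_of_nonpos_of_nonneg (by norm_num) (by linarith))
  -- ρ^e < 1/(E+1) hence ρ < r₀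
  have hρe : ρ ^ e < 1/(E+1) := by
    have h1 : 0 < ρ ^ (e+2) := pow_pos hρ _
    rw [lt_div_iff₀ (by linarith)]
    nlinarith
  have hρr₀ : ρ < r₀ := by
    apply lt_of_pow_lt_pow_left₀ e hr₀pos.le
    rw [hr₀pow]; exact hρe
  have hρlt1 : ρ < 1 := lt_of_lt_of_le hρr₀ hr₀le1
  set M : ℝ := r₀ * (1 - 1/(E+1)) with hMdef
  have hMpos : 0 < M := by
    apply mul_pos hr₀pos
    have : 1/(E+1) < 1 := by rw [div_lt_one (by linarith)]; linarith
    linarith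
  clear_value c r₀ M
  -- tangent line bound on the numerator
  have hnum_le : ∀ r : ℝ, 0 ≤ r → r - r ^ (e+1) ≤ M := by
    intro r hr
    have ha : (-2:ℝ) ≤ r/r₀ - 1 := by
      have : 0 ≤ r/r₀ := div_nonneg hr hr₀pos.le
      linarith
    have key := one_add_mul_le_pow ha (e+1)
    have h1 : r₀ ^ (e+1) * (1 + ((e:ℕ)+1 : ℝ) * (r/r₀ - 1)) ≤ r₀ ^ (e+1) * (1 + (r/r₀ - 1)) ^ (e+1) := by
      apply mul_le_mul_of_nonneg_left _ (pow_nonneg hr₀pos.le _)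
      convert key using 2
      push_cast; ring
    have h2 : (1 + (r/r₀ - 1)) = r / r₀ := by ring
    have h3 : r₀ ^ (e+1) * (r/r₀) ^ (e+1) = r ^ (e+1) := by
      rw [← mul_pow]; congr 1; field_simp
    rw [h2, h3] at h1
    have h4 : r₀ ^ (e+1) = r₀ * (1/(E+1)) := by
      rw [pow_succ, hr₀pow]; ring
    have h5 : r₀ ^ (e+1) * (1 + ((e:ℕ)+1 : ℝ) * (r/r₀ - 1))
        = r₀ ^ (e+1) + r - r₀ := by
      rw [h4]; push_cast; rw [← hEdef]
      field_simp
      ring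
    rw [h5, h4] at h1
    rw [hMdef]
    nlinarith
  have hBρpos : (0:ℝ) < ρ ^ (e+2) + n := by positivity
  have hBcpos : (0:ℝ) < (ρ ^ (e+2) + (n:ℝ)) ^ c := Real.rpow_pos_of_pos hBρpos _
  refine ⟨?_, ?_, ?_⟩
  · -- lower bound
    have hgoal : (ρ - ρ ^ (e+1)) / (ρ ^ (e+2) + (n:ℝ)) ^ c = etaF e (n:ℝ) c ρ := rfl
    rw [hgoal]
    have hanti : StrictAntiOn (etaF e (n:ℝ) c) (Set.Icc ρ r₀) := by
      apply strictAntiOn_of_deriv_neg (convex_Icc _ _)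
      · intro x hx
        exact ((etaF_hasDerivAt e (n:ℝ) c x hnpos
          (lt_of_lt_of_le hρ hx.1)).continuousAt).continuousWithinAt
      · intro x hx
        rw [interior_Icc] at hx
        have hxpos : 0 < x := hρ.trans hx.1
        rw [(etaF_hasDerivAt e (n:ℝ) c x hnpos hxpos).deriv]
        have hBx : (0:ℝ) < x ^ (e+2) + n := by positivity
        have hBcx : (0:ℝ) < (x ^ (e+2) + (n:ℝ)) ^ c := Real.rpow_pos_of_pos hBx _
        apply div_neg_of_neg_of_pos _ (by positivity)
        have hc1 : (x ^ (e+2) + (n:ℝ)) ^ (c-1)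
            = (x ^ (e+2) + (n:ℝ)) ^ c / (x ^ (e+2) + (n:ℝ)) := by
          rw [Real.rpow_sub hBx, Real.rpow_one]
        have h1 : ρ ^ (e+2) < x ^ (e+2) := by
          apply pow_lt_pow_left₀ hx.1 hρ.le
          omega
        have h2 : ρ ^ e < x ^ e := by
          apply pow_lt_pow_left₀ hx.1 hρ.le
          omega
        have hg : 0 < E * x ^ (e+2) + (E+1) * (n:ℝ) * x ^ e - n := by
          nlinarith [mul_pos hEpos (sub_pos.2 h1),
            mul_pos (mul_pos (by linarith : (0:ℝ) < E+1) hnpos) (sub_pos.2 h2)]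
        have h2ne : (E+2) ≠ 0 := by positivity
        have hkey : (1 - (E+1) * x ^ e) * (x ^ (e+2) + (n:ℝ)) ^ c -
            (x - x ^ (e+1)) * (c * (x ^ (e+2) + (n:ℝ)) ^ (c-1) * ((E+2) * x ^ (e+1)))
            = ((x ^ (e+2) + (n:ℝ)) ^ c / (x ^ (e+2) + (n:ℝ))) *
              (-(E * x ^ (e+2) + (E+1) * (n:ℝ) * x ^ e - n)) := by
          rw [hc1, hcdef]
          field_simp
          ring
        rw [hkey]
        exact mul_neg_of_pos_of_neg (by positivity) (by linarith)
    have hρmem : ρ ∈ Set.Icc ρ r₀ := ⟨le_refl _, hρr₀.le⟩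
    have hr₀mem : r₀ ∈ Set.Icc ρ r₀ := ⟨hρr₀.le, le_refl _⟩
    have hFρ : etaF e (n:ℝ) c r₀ < etaF e (n:ℝ) c ρ := hanti hρmem hr₀mem hρr₀
    have hFr₀ : M * ((n:ℝ)+1) ^ (-(E+1)/(E+2)) ≤ etaF e (n:ℝ) c r₀ := by
      have hnum : r₀ - r₀ ^ (e+1) = M := by
        rw [hMdef, pow_succ, hr₀pow]; ring
      have hden : (r₀ ^ (e+2) + (n:ℝ)) ^ c ≤ ((n:ℝ)+1) ^ c := by
        apply Real.rpow_le_rpow (by positivity) _ hcpos.le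
        have : r₀ ^ (e+2) ≤ 1 := pow_le_one₀ hr₀pos.le hr₀le1
        linarith
      have hdpos : (0:ℝ) < (r₀ ^ (e+2) + (n:ℝ)) ^ c :=
        Real.rpow_pos_of_pos (by positivity) _
      have hrw : ((n:ℝ)+1) ^ (-(E+1)/(E+2)) = (((n:ℝ)+1) ^ c)⁻¹ := by
        rw [neg_div, Real.rpow_neg (by positivity), hcdef]
      rw [hrw, ← div_eq_mul_inv]
      show M / ((n:ℝ)+1) ^ c ≤ (r₀ - r₀ ^ (e+1)) / (r₀ ^ (e+2) + (n:ℝ)) ^ c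
      rw [hnum]
      exact div_le_div_of_nonneg_left hMpos.le hdpos hden
    linarith
  · -- upper bound
    have hnc : (n:ℝ) ^ c ≤ (ρ ^ (e+2) + (n:ℝ)) ^ c := by
      apply Real.rpow_le_rpow hnpos.le _ hcpos.le
      nlinarith [pow_pos hρ (e+2)]
    have h1 : (ρ - ρ ^ (e+1)) / (ρ ^ (e+2) + (n:ℝ)) ^ c ≤ M / (n:ℝ) ^ c :=
      div_le_div₀ hMpos.le (hnum_le ρ hρ.le) (Real.rpow_pos_of_pos hnpos _) hnc
    calc (ρ - ρ ^ (e+1)) / (ρ ^ (e+2) + (n:ℝ)) ^ c ≤ M / (n:ℝ) ^ c := h1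
      _ = M * (n:ℝ) ^ (-(E+1)/(E+2)) := by
          rw [neg_div, Real.rpow_neg hnpos.le, div_eq_mul_inv, hcdef]
  · -- strict bound by 1
    have hnc1 : (n:ℝ) ^ (-(E+1)/(E+2)) ≤ 1 := by
      apply Real.rpow_le_one_of_one_le_of_nonpos hn1
      rw [neg_div]
      simp only [Left.neg_nonpos_iff]
      positivity
    have hncpos : (0:ℝ) < (n:ℝ) ^ (-(E+1)/(E+2)) := Real.rpow_pos_of_pos hnpos _
    have hM1 : M < 1 := by
      rw [hMdef]
      have h1 : 1 - 1/(E+1) < 1 := by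
        have : 0 < 1/(E+1) := by positivity
        linarith
      have h2 : 0 ≤ 1 - 1/(E+1) := by
        rw [sub_nonneg, div_le_one (by linarith : (0:ℝ) < E+1)]; linarith
      calc r₀ * (1 - 1/(E+1)) ≤ 1 * (1 - 1/(E+1)) :=
            mul_le_mul_of_nonneg_right hr₀le1 h2
        _ = 1 - 1/(E+1) := one_mul _
        _ < 1 := h1
    calc M * (n:ℝ) ^ (-(E+1)/(E+2)) ≤ M * 1 := by
          exact mul_le_mul_of_nonneg_left hnc1 hMpos.le
      _ = M := mul_one M
      _ < 1 := hM1
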